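/- A continuous t-norm T that is general pseudo-homogeneous for some binary function F cannot be a non-trivial ordinal sum of continuous Archimedean t-norms; concretely, if T is a continuous general pseudo-homogeneous t-norm that has an idempotent element a∈(0,1) (T(a,a)=a) together with some x∈(a,1) with T(x,x)<x, then a contradiction follows. (Equivalently: a continuous general pseudo-homogeneous t-norm has no interior idempotent elements unless T=min.) -/
import Mathlib


open Set Filter Topology

def IsTnorm (T : ℝ → ℝ → ℝ) : Prop :=
  (∀ x ∈ Set.Icc (0:ℝ) 1, ∀ y ∈ Set.Icc (0:ℝ) 1, T x y ∈ Set.Icc (0:ℝ) 1) ∧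
  (∀ x ∈ Set.Icc (0:ℝ) 1, ∀ y ∈ Set.Icc (0:ℝ) 1, T x y = T y x) ∧
  (∀ x ∈ Set.Icc (0:ℝ) 1, ∀ y ∈ Set.Icc (0:ℝ) 1, ∀ z ∈ Set.Icc (0:ℝ) 1,
      T x (T y z) = T (T x y) z) ∧
  (∀ x ∈ Set.Icc (0:ℝ) 1, ∀ y ∈ Set.Icc (0:ℝ) 1, ∀ z ∈ Set.Icc (0:ℝ) 1,
      y ≤ z → T x y ≤ T x z) ∧
  (∀ x ∈ Set.Icc (0:ℝ) 1, T x 1 = x)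

def IsGPH (T F : ℝ → ℝ → ℝ) : Prop :=
  ∀ lam ∈ Set.Icc (0:ℝ) 1, ∀ x ∈ Set.Icc (0:ℝ) 1, ∀ y ∈ Set.Icc (0:ℝ) 1,
    T (lam * x) (lam * y) = F lam (T x y)

noncomputable def TD : ℝ → ℝ → ℝ := fun x y => if max x y = 1 then min x y else 0

theorem no_interior_idempotent (T : ℝ → ℝ → ℝ) (hT : IsTnorm T)
    (h : ∃ F : ℝ → ℝ → ℝ, IsGPH T F)
    (hcont : ContinuousOn (fun p : ℝ × ℝ => T p.1 p.2)
      (Set.Icc (0:ℝ) 1 ×ˢ Set.Icc (0:ℝ) 1))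
    (a : ℝ) (ha : a ∈ Set.Ioo (0:ℝ) 1) (hid : T a a = a)
    (x : ℝ) (hx : x ∈ Set.Ioo a 1) (hlt : T x x < x) : False := by
  obtain ⟨F, hF⟩ := h
  obtain ⟨hbd, hcomm, hassoc, hmono, hunit⟩ := hT
  obtain ⟨ha0, ha1⟩ := ha
  obtain ⟨hax, hx1⟩ := hx
  have hx0 : (0:ℝ) < x := lt_trans ha0 hax
  have hxI : x ∈ Set.Icc (0:ℝ) 1 := ⟨le_of_lt hx0, le_of_lt hx1⟩
  have h1I : (1:ℝ) ∈ Set.Icc (0:ℝ) 1 := ⟨zero_le_one, le_refl 1⟩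
  set c := T x x with hc
  have hcI : c ∈ Set.Icc (0:ℝ) 1 := hbd x hxI x hxI
  have hlI : a / x ∈ Set.Icc (0:ℝ) 1 :=
    ⟨by positivity, by rw [div_le_one hx0]; linarith⟩
  have h1 : T ((a/x)*x) ((a/x)*x) = F (a/x) c := hF _ hlI x hxI x hxI
  have h2 : T ((a/x)*c) ((a/x)*1) = F (a/x) (T c 1) := hF _ hlI c hcI 1 h1I
  have hcu : T c 1 = c := hunit c hcI
  rw [div_mul_cancel₀ a (ne_of_gt hx0), hid] at h1
  rw [hcu, ← h1, mul_one] at h2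
  -- h2 : T ((a/x)*c) (a/x) = a
  have hpI : (a/x)*c ∈ Set.Icc (0:ℝ) 1 := by
    constructor
    · exact mul_nonneg hlI.1 hcI.1
    · exact mul_le_one₀ hlI.2 hcI.1 hcI.2
  have hle : T ((a/x)*c) (a/x) ≤ (a/x)*c := by
    have := hmono ((a/x)*c) hpI (a/x) hlI 1 h1I hlI.2
    rwa [hunit _ hpI] at this
  have hsm : (a/x)*c < a := by
    have h3 : (a/x)*c < (a/x)*x := by
      apply mul_lt_mul_of_pos_left hlt
      positivity
    rwa [div_mul_cancel₀ a (ne_of_gt hx0)] at h3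
  linarith
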